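/- Let I₀, I₁, α₀, α₁, β₀, β₁ be the 2×2 matrices I₀=[[1,0],[½,½]], I₁=[[½,½],[0,1]], α₀=½[[0,0],[1,-1]], α₁=½[[1,-1],[0,0]], β₀=½[[0,0],[1,1]], β₁=½[[1,1],[0,0]]. For X ∈ {0,1}^ℕ let F^{(n)}_{(α^p, β^q)}(X) be the set of products M_X(u) over words u ∈ {I,α,β}^* of length n with exactly p letters α and q letters β (where the j-th letter l of u is substituted by l_{X_j}). Then, measuring with the maximal l¹ row norm ‖·‖ (which is submultiplicative), there is a constant C (depending on p,q but not X) with Σ_{M∈F^{(n)}_{(α^p,β^q)}(X)} ‖M‖ ≤ C·n^q for all n. -/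

import Mathlib

/-- The alphabet {I, α, β}. -/
inductive MSym : Type
  | I : MSym
  | a : MSym
  | b : MSym
  deriving DecidableEq

instance : Fintype MSym :=
  ⟨{MSym.I, MSym.a, MSym.b}, fun x => by cases x <;> simp⟩

/-- The matrices I₀, I₁, α₀, α₁, β₀, β₁, indexed by a symbol and a binary digit. -/
noncomputable def msym (s : MSym) (x : Bool) : Matrix (Fin 2) (Fin 2) ℝ :=
  match s, x with
  | MSym.I, false => !![1, 0; 1/2, 1/2]
  | MSym.I, true  => !![1/2, 1/2; 0, 1]
  | MSym.a, false => !![0, 0; 1/2, -(1/2)]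
  | MSym.a, true  => !![1/2, -(1/2); 0, 0]
  | MSym.b, false => !![0, 0; 1/2, 1/2]
  | MSym.b, true  => !![1/2, 1/2; 0, 0]

/-- The product `M_X(u)` for a word `u : Fin n → MSym`, where the `j`-th letter is
substituted by the matrix indexed by the digit `X j`. -/
noncomputable def MX (X : ℕ → Bool) (n : ℕ) (w : Fin n → MSym) :
    Matrix (Fin 2) (Fin 2) ℝ :=
  (List.ofFn fun j : Fin n => msym (w j) (X j)).prod

/-- The maximal l¹ row norm on 2×2 real matrices. -/
noncomputable def rowNorm (M : Matrix (Fin 2) (Fin 2) ℝ) : ℝ :=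
  max (|M 0 0| + |M 0 1|) (|M 1 0| + |M 1 1|)

lemma rowNorm_nonneg (M : Matrix (Fin 2) (Fin 2) ℝ) : 0 ≤ rowNorm M :=
  le_trans (by positivity) (le_max_left _ _)

lemma rowNorm_one : rowNorm (1 : Matrix (Fin 2) (Fin 2) ℝ) = 1 := by
  simp [rowNorm, Matrix.one_apply]

lemma row_le (M : Matrix (Fin 2) (Fin 2) ℝ) (i : Fin 2) :
    |M i 0| + |M i 1| ≤ rowNorm M := by
  fin_cases i
  · exact le_max_left _ _
  · exact le_max_right _ _

lemma rowNorm_mul_le (A B : Matrix (Fin 2) (Fin 2) ℝ) :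
    rowNorm (A * B) ≤ rowNorm A * rowNorm B := by
  have hB := rowNorm_nonneg B
  have hi : ∀ i : Fin 2, |(A * B) i 0| + |(A * B) i 1| ≤ (|A i 0| + |A i 1|) * rowNorm B := by
    intro i
    have e0 : (A * B) i 0 = A i 0 * B 0 0 + A i 1 * B 1 0 := by
      simp [Matrix.mul_apply, Fin.sum_univ_two]
    have e1 : (A * B) i 1 = A i 0 * B 0 1 + A i 1 * B 1 1 := by
      simp [Matrix.mul_apply, Fin.sum_univ_two]
    have h0 : |(A * B) i 0| ≤ |A i 0| * |B 0 0| + |A i 1| * |B 1 0| := by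
      rw [e0]; exact (abs_add_le _ _).trans (by rw [abs_mul, abs_mul])
    have h1 : |(A * B) i 1| ≤ |A i 0| * |B 0 1| + |A i 1| * |B 1 1| := by
      rw [e1]; exact (abs_add_le _ _).trans (by rw [abs_mul, abs_mul])
    have hr0 : |B 0 0| + |B 0 1| ≤ rowNorm B := row_le B 0
    have hr1 : |B 1 0| + |B 1 1| ≤ rowNorm B := row_le B 1
    nlinarith [abs_nonneg (A i 0), abs_nonneg (A i 1)]
  have key : ∀ i : Fin 2, |(A * B) i 0| + |(A * B) i 1| ≤ rowNorm A * rowNorm B := by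
    intro i
    exact (hi i).trans (mul_le_mul_of_nonneg_right (row_le A i) hB)
  exact max_le (key 0) (key 1)

lemma rowNorm_smul_half (M : Matrix (Fin 2) (Fin 2) ℝ) :
    rowNorm ((1/2 : ℝ) • M) ≤ 1/2 * rowNorm M := by
  have h0 : |M 0 0| + |M 0 1| ≤ rowNorm M := row_le M 0
  have h1 : |M 1 0| + |M 1 1| ≤ rowNorm M := row_le M 1
  unfold rowNorm at h0 h1 ⊢
  simp only [Matrix.smul_apply, smul_eq_mul, abs_mul]
  rw [abs_of_pos (by norm_num : (0:ℝ) < 1/2)]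
  apply max_le <;> nlinarith [le_max_left (|M 0 0| + |M 0 1|) (|M 1 0| + |M 1 1|),
    le_max_right (|M 0 0| + |M 0 1|) (|M 1 0| + |M 1 1|)]

lemma rowNorm_msym_le (c : MSym) (x : Bool) : rowNorm (msym c x) ≤ 1 := by
  cases c <;> cases x <;> norm_num [msym, rowNorm, abs_of_nonneg, abs_of_nonpos]

lemma a_mul_I (x y : Bool) :
    msym MSym.a x * msym MSym.I y = (1/2 : ℝ) • msym MSym.a x := by
  cases x <;> cases y <;>
    · ext i j
      fin_cases i <;> fin_cases j <;>
        simp [msym, Matrix.mul_apply, Fin.sum_univ_two] <;> norm_num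
noncomputable def wt : Bool → List MSym → ℝ
  | _, [] => 1
  | s, MSym.I :: t => (if s then (1/2:ℝ) else 1) * wt s t
  | _, MSym.a :: t => wt true t
  | _, MSym.b :: t => wt false t

lemma wt_nonneg : ∀ (s : Bool) (l : List MSym), 0 ≤ wt s l
  | _, [] => by simp [wt]
  | s, MSym.I :: t => by
      have := wt_nonneg s t
      cases s <;> simp [wt] <;> linarith
  | s, MSym.a :: t => by simpa [wt] using wt_nonneg true t
  | s, MSym.b :: t => by simpa [wt] using wt_nonneg false t

lemma key_lemma : ∀ (l : List (MSym × Bool)) (s : Bool) (A : Matrix (Fin 2) (Fin 2) ℝ),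
    (s = true → ∀ y, A * msym MSym.I y = (1/2 : ℝ) • A) →
    rowNorm (A * (l.map fun cx => msym cx.1 cx.2).prod) ≤ rowNorm A * wt s (l.map Prod.fst)
  | [], s, A, _ => by simp [wt]
  | (MSym.I, x) :: t, s, A, hA => by
      simp only [List.map_cons, List.prod_cons, wt]
      rw [← mul_assoc]
      cases s with
      | true =>
          rw [hA rfl x, smul_mul_assoc]
          calc rowNorm ((1/2 : ℝ) • (A * (t.map fun cx => msym cx.1 cx.2).prod))
              ≤ 1/2 * rowNorm (A * (t.map fun cx => msym cx.1 cx.2).prod) :=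
                rowNorm_smul_half _
            _ ≤ 1/2 * (rowNorm A * wt true (t.map Prod.fst)) := by
                have := key_lemma t true A hA
                linarith
            _ = rowNorm A * ((if true then (1/2:ℝ) else 1) * wt true (t.map Prod.fst)) := by
                first | (simp; ring) | simp
      | false =>
          calc rowNorm (A * msym MSym.I x * (t.map fun cx => msym cx.1 cx.2).prod)
              ≤ rowNorm (A * msym MSym.I x) * wt false (t.map Prod.fst) :=
                key_lemma t false _ (by simp)
            _ ≤ rowNorm A * 1 * wt false (t.map Prod.fst) := by
                apply mul_le_mul_of_nonneg_right _ (wt_nonneg _ _)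
                exact (rowNorm_mul_le _ _).trans
                  (mul_le_mul_of_nonneg_left (rowNorm_msym_le _ _) (rowNorm_nonneg _))
            _ = rowNorm A * ((if false then (1/2:ℝ) else 1) * wt false (t.map Prod.fst)) := by
                first | (simp; ring) | simp
  | (MSym.a, x) :: t, s, A, _ => by
      simp only [List.map_cons, List.prod_cons, wt]
      rw [← mul_assoc]
      calc rowNorm (A * msym MSym.a x * (t.map fun cx => msym cx.1 cx.2).prod)
          ≤ rowNorm (A * msym MSym.a x) * wt true (t.map Prod.fst) := by
            apply key_lemma t true _
            intro _ y
            rw [mul_assoc, a_mul_I, mul_smul_comm]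
        _ ≤ rowNorm A * wt true (t.map Prod.fst) := by
            apply mul_le_mul_of_nonneg_right _ (wt_nonneg _ _)
            calc rowNorm (A * msym MSym.a x) ≤ rowNorm A * rowNorm (msym MSym.a x) :=
                  rowNorm_mul_le _ _
              _ ≤ rowNorm A * 1 :=
                  mul_le_mul_of_nonneg_left (rowNorm_msym_le _ _) (rowNorm_nonneg _)
              _ = rowNorm A := mul_one _
  | (MSym.b, x) :: t, s, A, _ => by
      simp only [List.map_cons, List.prod_cons, wt]
      rw [← mul_assoc]
      calc rowNorm (A * msym MSym.b x * (t.map fun cx => msym cx.1 cx.2).prod)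
          ≤ rowNorm (A * msym MSym.b x) * wt false (t.map Prod.fst) :=
            key_lemma t false _ (by simp)
        _ ≤ rowNorm A * wt false (t.map Prod.fst) := by
            apply mul_le_mul_of_nonneg_right _ (wt_nonneg _ _)
            calc rowNorm (A * msym MSym.b x) ≤ rowNorm A * rowNorm (msym MSym.b x) :=
                  rowNorm_mul_le _ _
              _ ≤ rowNorm A * 1 :=
                  mul_le_mul_of_nonneg_left (rowNorm_msym_le _ _) (rowNorm_nonneg _)
              _ = rowNorm A := mul_one _
lemma rowNorm_MX_le (X : ℕ → Bool) (n : ℕ) (w : Fin n → MSym) :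
    rowNorm (MX X n w) ≤ wt false (List.ofFn w) := by
  have h := key_lemma (List.ofFn fun j : Fin n => (w j, X j)) false 1 (by simp)
  rw [rowNorm_one, one_mul, one_mul, List.map_ofFn, List.map_ofFn] at h
  simpa [MX, Function.comp_def] using h
def cnt {n : ℕ} (w : Fin n → MSym) (c : MSym) : ℕ :=
  (Finset.univ.filter fun j => w j = c).card

noncomputable def G (s : Bool) (n p q : ℕ) : ℝ :=
  ∑ w ∈ Finset.univ.filter (fun w : Fin n → MSym => cnt w MSym.a = p ∧ cnt w MSym.b = q),
    wt s (List.ofFn w)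

lemma G_nonneg (s : Bool) (n p q : ℕ) : 0 ≤ G s n p q :=
  Finset.sum_nonneg fun w _ => wt_nonneg s _

lemma G_zero (s : Bool) (p q : ℕ) : G s 0 p q = if p = 0 ∧ q = 0 then 1 else 0 := by
  unfold G cnt
  rw [Finset.sum_filter]
  rw [Fintype.sum_eq_single (fun _ => MSym.I) (fun x hx => absurd (funext fun j => j.elim0) hx)]
  simp [wt, eq_comm]

lemma msym_univ : (Finset.univ : Finset MSym) = {MSym.I, MSym.a, MSym.b} := by
  decide

lemma sum_cons {n : ℕ} (f : (Fin (n+1) → MSym) → ℝ) :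
    ∑ w : Fin (n+1) → MSym, f w = ∑ c : MSym, ∑ w' : Fin n → MSym, f (Fin.cons c w') := by
  rw [← (Fin.consEquiv (fun _ => MSym)).sum_comp f, Fintype.sum_prod_type]
  rfl

lemma cnt_cons {n : ℕ} (c : MSym) (w : Fin n → MSym) (s : MSym) :
    cnt (Fin.cons c w) s = (if c = s then 1 else 0) + cnt w s := by
  unfold cnt
  rw [Finset.card_filter, Finset.card_filter, Fin.sum_univ_succ]
  simp
lemma ofFn_cons {n : ℕ} (c : MSym) (w : Fin n → MSym) :
    List.ofFn (Fin.cons c w) = c :: List.ofFn w := by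
  rw [List.ofFn_succ]; simp

lemma termI {n p q : ℕ} {s : Bool} :
    (∑ w' : Fin n → MSym, if cnt (Fin.cons MSym.I w') MSym.a = p ∧
        cnt (Fin.cons MSym.I w') MSym.b = q then wt s (List.ofFn (Fin.cons MSym.I w')) else 0)
      = (if s then (1/2:ℝ) else 1) * G s n p q := by
  rw [G, Finset.sum_filter, Finset.mul_sum]
  apply Finset.sum_congr rfl
  intro w' _
  rw [ofFn_cons]
  cases s <;> simp [cnt_cons, wt, mul_ite]

lemma termA {n p q : ℕ} {s : Bool} :
    (∑ w' : Fin n → MSym, if cnt (Fin.cons MSym.a w') MSym.a = p ∧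
        cnt (Fin.cons MSym.a w') MSym.b = q then wt s (List.ofFn (Fin.cons MSym.a w')) else 0)
      = (if p = 0 then 0 else G true n (p-1) q) := by
  cases p with
  | zero => simp [cnt_cons]
  | succ p' =>
      simp only [Nat.succ_ne_zero, if_false]
      rw [G, Finset.sum_filter]
      apply Finset.sum_congr rfl
      intro w' _
      rw [ofFn_cons]
      cases s <;> simp [cnt_cons, wt, Nat.add_comm 1]

lemma termB {n p q : ℕ} {s : Bool} :
    (∑ w' : Fin n → MSym, if cnt (Fin.cons MSym.b w') MSym.a = p ∧
        cnt (Fin.cons MSym.b w') MSym.b = q then wt s (List.ofFn (Fin.cons MSym.b w')) else 0)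
      = (if q = 0 then 0 else G false n p (q-1)) := by
  cases q with
  | zero => simp [cnt_cons]
  | succ q' =>
      simp only [Nat.succ_ne_zero, if_false]
      rw [G, Finset.sum_filter]
      apply Finset.sum_congr rfl
      intro w' _
      rw [ofFn_cons]
      cases s <;> simp [cnt_cons, wt, Nat.add_comm 1]

lemma G_succ (s : Bool) (n p q : ℕ) :
    G s (n+1) p q = (if s then (1/2:ℝ) else 1) * G s n p q
      + (if p = 0 then 0 else G true n (p-1) q)
      + (if q = 0 then 0 else G false n p (q-1)) := by
  rw [show G s (n+1) p q = ∑ w : Fin (n+1) → MSym,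
      (if cnt w MSym.a = p ∧ cnt w MSym.b = q then wt s (List.ofFn w) else 0) from by
    rw [G, Finset.sum_filter]]
  rw [sum_cons, msym_univ, Finset.sum_insert (by decide), Finset.sum_insert (by decide),
    Finset.sum_singleton, termI, termA, termB]
  ring
lemma pow_mono_shift (x : ℝ) (hx : 0 ≤ x) (k : ℕ) : (x+1)^k ≤ (x+2)^k :=
  pow_le_pow_left₀ (by linarith) (by linarith) k

lemma pow_margin (x : ℝ) (hx : 0 ≤ x) (q : ℕ) :
    (x+1)^(q+1) + (x+1)^q ≤ (x+2)^(q+1) := by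
  have h : (x+1)^q ≤ (x+2)^q := pow_mono_shift x hx q
  have h2 : (0:ℝ) ≤ (x+1)^q := by positivity
  calc (x+1)^(q+1) + (x+1)^q = (x+2) * (x+1)^q := by ring
    _ ≤ (x+2) * (x+2)^q := mul_le_mul_of_nonneg_left h (by linarith)
    _ = (x+2)^(q+1) := by ring

lemma T_q0 (p : ℕ) : ∃ A : ℝ, 1 ≤ A ∧ ∀ n, G true n p 0 ≤ A * (3/4:ℝ)^n := by
  induction p with
  | zero =>
      refine ⟨1, le_refl 1, ?_⟩
      intro n
      induction n with
      | zero => rw [G_zero]; norm_num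
      | succ n ih =>
          rw [G_succ]
          have h1 : (0:ℝ) ≤ (3/4:ℝ)^n := by positivity
          have h2 : 0 ≤ G true n 0 0 := G_nonneg _ _ _ _
          simp only [if_pos rfl, if_true, pow_succ]
          nlinarith
  | succ p' ih =>
      obtain ⟨A, hA1, hA⟩ := ih
      refine ⟨4*A, by linarith, ?_⟩
      intro n
      induction n with
      | zero => rw [G_zero]; simp; positivity
      | succ n ihn =>
          rw [G_succ]
          have h1 : (0:ℝ) ≤ (3/4:ℝ)^n := by positivity
          have h3 := hA n
          simp only [Nat.succ_ne_zero, if_false, if_true, Nat.succ_sub_one, pow_succ]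
          nlinarith

lemma F_q0 (p : ℕ) : ∃ B : ℝ, 1 ≤ B ∧ ∀ n, G false n p 0 ≤ B := by
  cases p with
  | zero =>
      refine ⟨1, le_refl 1, ?_⟩
      intro n
      induction n with
      | zero => rw [G_zero]; norm_num
      | succ n ih => rw [G_succ]; simpa using ih
  | succ p' =>
      obtain ⟨A, hA1, hA⟩ := T_q0 p'
      refine ⟨1 + 4*A, by linarith, ?_⟩
      have key : ∀ n, G false n (p'+1) 0 ≤ (1 + 4*A) - 4*A*(3/4:ℝ)^n := by
        intro n
        induction n with
        | zero => rw [G_zero]; norm_num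
        | succ n ihn =>
            rw [G_succ]
            have h3 := hA n
            simp only [Nat.succ_ne_zero, if_false, Nat.succ_sub_one, pow_succ]
            norm_num
            nlinarith
      intro n
      have h1 : (0:ℝ) ≤ (3/4:ℝ)^n := by positivity
      have := key n
      nlinarith

lemma mainF : ∀ q p : ℕ, ∃ B : ℝ, 1 ≤ B ∧ ∀ n : ℕ, G false n p q ≤ B * ((n:ℝ)+1)^q := by
  intro q
  induction q with
  | zero =>
      intro p
      obtain ⟨B, hB1, hB⟩ := F_q0 p
      exact ⟨B, hB1, fun n => by simpa using hB n⟩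
  | succ q ihq =>
      have hT : ∀ p, ∃ A : ℝ, 1 ≤ A ∧ ∀ n : ℕ, G true n p (q+1) ≤ A * ((n:ℝ)+1)^q := by
        intro p
        induction p with
        | zero =>
            obtain ⟨B, hB1, hB⟩ := ihq 0
            refine ⟨2*B + 2, by linarith, ?_⟩
            intro n
            induction n with
            | zero => rw [G_zero]; norm_num; nlinarith
            | succ n ihn =>
                rw [G_succ]
                have hp : ((n:ℝ)+1)^q ≤ ((n:ℝ)+2)^q := pow_mono_shift _ (Nat.cast_nonneg n) q
                have hq : (0:ℝ) ≤ ((n:ℝ)+1)^q := by positivity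
                have h3 := hB n
                simp only [Nat.succ_ne_zero, if_false, if_true, Nat.succ_sub_one]
                push_cast
                have : ((n:ℝ)+1+1) = ((n:ℝ)+2) := by ring
                rw [this]
                nlinarith
        | succ p' ihp =>
            obtain ⟨A, hA1, hA⟩ := ihp
            obtain ⟨B, hB1, hB⟩ := ihq (p'+1)
            refine ⟨2*A + 2*B, by linarith, ?_⟩
            intro n
            induction n with
            | zero => rw [G_zero]; norm_num; nlinarith
            | succ n ihn =>
                rw [G_succ]
                have hp : ((n:ℝ)+1)^q ≤ ((n:ℝ)+2)^q := pow_mono_shift _ (Nat.cast_nonneg n) q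
                have hq : (0:ℝ) ≤ ((n:ℝ)+1)^q := by positivity
                have h3 := hA n
                have h4 := hB n
                simp only [Nat.succ_ne_zero, if_false, if_true, Nat.succ_sub_one]
                push_cast
                have : ((n:ℝ)+1+1) = ((n:ℝ)+2) := by ring
                rw [this]
                nlinarith
      intro p
      obtain ⟨B, hB1, hB⟩ := ihq p
      cases p with
      | zero =>
          refine ⟨B + 1, by linarith, ?_⟩
          intro n
          induction n with
          | zero => rw [G_zero]; norm_num; nlinarith
          | succ n ihn =>
              rw [G_succ]
              have hm := pow_margin (n:ℝ) (Nat.cast_nonneg n) q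
              have hq : (0:ℝ) ≤ ((n:ℝ)+1)^q := by positivity
              have hq1 : (0:ℝ) ≤ ((n:ℝ)+1)^(q+1) := by positivity
              have h3 := hB n
              simp only [if_false, Nat.succ_sub_one, if_true]
              push_cast
              have e : ((n:ℝ)+1+1) = ((n:ℝ)+2) := by ring
              rw [e]
              nlinarith
      | succ p' =>
          obtain ⟨A, hA1, hA⟩ := hT p'
          refine ⟨A + B + 1, by linarith, ?_⟩
          intro n
          induction n with
          | zero => rw [G_zero]; norm_num; nlinarith
          | succ n ihn =>
              rw [G_succ]
              have hm := pow_margin (n:ℝ) (Nat.cast_nonneg n) q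
              have hq : (0:ℝ) ≤ ((n:ℝ)+1)^q := by positivity
              have hq1 : (0:ℝ) ≤ ((n:ℝ)+1)^(q+1) := by positivity
              have h3 := hB n
              have h4 := hA n
              simp only [Nat.succ_ne_zero, if_false, Nat.succ_sub_one]
              push_cast
              have e : ((n:ℝ)+1+1) = ((n:ℝ)+2) := by ring
              rw [e]
              nlinarith
theorem type_contributes_with_weight_q (p q : ℕ) :
    ∃ C : ℝ, 0 < C ∧ ∀ (X : ℕ → Bool) (n : ℕ),
      ∑ w ∈ Finset.univ.filter (fun w : Fin n → MSym =>
          (Finset.univ.filter fun j => w j = MSym.a).card = p ∧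
          (Finset.univ.filter fun j => w j = MSym.b).card = q),
        rowNorm (MX X n w) ≤ C * n ^ q := by
  obtain ⟨B, hB1, hB⟩ := mainF q p
  refine ⟨2^q * B, by positivity, ?_⟩
  intro X n
  have hsum : (∑ w ∈ Finset.univ.filter (fun w : Fin n → MSym =>
          (Finset.univ.filter fun j => w j = MSym.a).card = p ∧
          (Finset.univ.filter fun j => w j = MSym.b).card = q),
        rowNorm (MX X n w)) ≤ G false n p q := by
    unfold G cnt
    exact Finset.sum_le_sum fun w _ => rowNorm_MX_le X n w
  rcases Nat.eq_zero_or_pos n with hn | hn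
  · subst hn
    have h0 := hsum.trans (le_of_eq (G_zero false p q))
    rcases Nat.eq_zero_or_pos q with hq | hq
    · subst hq
      simp only [pow_zero, Nat.cast_zero]
      calc _ ≤ (if p = 0 ∧ 0 = 0 then (1:ℝ) else 0) := h0
        _ ≤ 1 := by split <;> norm_num
        _ ≤ 2^0 * B * (0:ℝ)^0 := by norm_num; linarith
    · have hq' : q ≠ 0 := Nat.pos_iff_ne_zero.mp hq
      calc _ ≤ (if p = 0 ∧ q = 0 then (1:ℝ) else 0) := h0
        _ ≤ 2^q * B * ((0:ℕ):ℝ)^q := by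
            rw [if_neg (by tauto)]
            simp [zero_pow hq']
  · have h1 : (1:ℝ) ≤ (n:ℝ) := by exact_mod_cast hn
    have h2 : ((n:ℝ)+1)^q ≤ (2*(n:ℝ))^q :=
      pow_le_pow_left₀ (by linarith) (by linarith) q
    calc _ ≤ G false n p q := hsum
      _ ≤ B * ((n:ℝ)+1)^q := hB n
      _ ≤ B * (2*(n:ℝ))^q := mul_le_mul_of_nonneg_left h2 (by linarith)
      _ = 2^q * B * (n:ℝ)^q := by rw [mul_pow]; ring
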